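/- Let ℓ, ℓ₁ > 0 and 0 < ℓ₃ < 2π. Define W(κ) = 128 sinh²(πκ)(κ⁴ℓ⁴ − 6κ²ℓ² + (κ²ℓ²+1)² cosh(2κ(π−ℓ₃)) + 1) − (ρ(κ) − τ(κ))², with ρ(κ) = (κ²ℓ²+1)²(sinh κ(2π−ℓ₁) + 2 sinh κℓ₁ cosh 2κ(π−ℓ₃)) and τ(κ) = (κ²ℓ²−3)² sinh κ(ℓ₁+2π) + 8(κ²ℓ²−1) sinh κℓ₁. Then W(κ) = −128π(ℓ₁+2π)((2π−ℓ₃)ℓ₃ + 2πℓ₁)κ⁴ + O(κ⁶) as κ → 0⁺; in particular there exists κ₀ > 0 such that W(κ) < 0 for all 0 < κ < κ₀. -/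
import Mathlib

open Real Filter Asymptotics

private lemma O_pow_of_le {m n : ℕ} (h : m ≤ n) :
    (fun κ : ℝ => κ ^ n) =O[nhds (0:ℝ)] (fun κ : ℝ => κ ^ m) := by
  rw [isBigO_iff]
  refine ⟨1, ?_⟩
  have h1 : ∀ᶠ κ : ℝ in nhds 0, |κ| ≤ 1 := by
    have hb : Metric.closedBall (0:ℝ) 1 ∈ nhds (0:ℝ) := Metric.closedBall_mem_nhds _ one_pos
    filter_upwards [hb] with κ hκ
    simpa [Real.dist_eq] using hκ
  filter_upwards [h1] with κ hκ
  rw [one_mul, Real.norm_eq_abs, Real.norm_eq_abs, abs_pow, abs_pow]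
  exact pow_le_pow_of_le_one (abs_nonneg κ) hκ h

private lemma O_cont0 {g : ℝ → ℝ} (hg : ContinuousAt g 0) :
    g =O[nhds (0:ℝ)] (fun κ : ℝ => κ ^ 0) := by
  simpa using hg.tendsto.isBigO_one ℝ

private lemma O_mul' {f g : ℝ → ℝ} {a b n : ℕ}
    (hf : f =O[nhds (0:ℝ)] fun κ => κ ^ a) (hg : g =O[nhds (0:ℝ)] fun κ => κ ^ b)
    (h : n ≤ a + b) :
    (fun κ => f κ * g κ) =O[nhds (0:ℝ)] fun κ => κ ^ n := by
  refine (hf.mul hg).trans ?_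
  simpa [pow_add] using O_pow_of_le h

private lemma O_weaken {f : ℝ → ℝ} {m n : ℕ} (h : m ≤ n)
    (hf : f =O[nhds (0:ℝ)] fun κ => κ ^ n) : f =O[nhds (0:ℝ)] fun κ => κ ^ m :=
  hf.trans (O_pow_of_le h)

private lemma O_poly_mul {f g : ℝ → ℝ} {n : ℕ} (hg : ContinuousAt g 0)
    (hf : f =O[nhds (0:ℝ)] fun κ => κ ^ n) :
    (fun κ => g κ * f κ) =O[nhds (0:ℝ)] fun κ => κ ^ n :=
  O_mul' (O_cont0 hg) hf (by omega)

private lemma exp_taylor5 {x : ℝ} (hx : |x| ≤ 1) :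
    |Real.exp x - (1 + x + x^2/2 + x^3/6 + x^4/24)| ≤ |x|^5 := by
  have h := Real.exp_bound hx (n := 5) (by norm_num)
  have hsum : (∑ m ∈ Finset.range 5, x ^ m / (Nat.factorial m))
      = 1 + x + x^2/2 + x^3/6 + x^4/24 := by
    simp [Finset.sum_range_succ, Nat.factorial]
    try ring
  rw [hsum] at h
  refine h.trans ?_
  have h1 : ((Nat.succ 5 : ℝ) / (Nat.factorial 5 * 5)) ≤ 1 := by
    norm_num [Nat.factorial]
  have h2 : (0:ℝ) ≤ |x|^5 := by positivity
  nlinarith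

private lemma sinh_taylor {x : ℝ} (hx : |x| ≤ 1) :
    |Real.sinh x - (x + x^3/6)| ≤ |x|^5 := by
  have h1 := exp_taylor5 hx
  have h2 := exp_taylor5 (x := -x) (by rwa [abs_neg])
  rw [Real.sinh_eq]
  have hA := abs_add_le (Real.exp x - (1 + x + x^2/2 + x^3/6 + x^4/24))
      (-(Real.exp (-x) - (1 + (-x) + (-x)^2/2 + (-x)^3/6 + (-x)^4/24)))
  rw [abs_neg] at hA
  have heq : (Real.exp x - Real.exp (-x))/2 - (x + x^3/6)
      = ((Real.exp x - (1 + x + x^2/2 + x^3/6 + x^4/24))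
        + -(Real.exp (-x) - (1 + (-x) + (-x)^2/2 + (-x)^3/6 + (-x)^4/24)))/2 := by ring
  rw [heq, abs_div, abs_two]
  rw [abs_neg] at h2
  have : |x|^5 = |(-x)|^5 := by rw [abs_neg]
  nlinarith [abs_nonneg ((Real.exp x - (1 + x + x^2/2 + x^3/6 + x^4/24))
        + -(Real.exp (-x) - (1 + (-x) + (-x)^2/2 + (-x)^3/6 + (-x)^4/24)))]

private lemma cosh_taylor {x : ℝ} (hx : |x| ≤ 1) :
    |Real.cosh x - (1 + x^2/2)| ≤ 2*|x|^4 := by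
  have h1 := exp_taylor5 hx
  have h2 := exp_taylor5 (x := -x) (by rwa [abs_neg])
  rw [Real.cosh_eq]
  have hA := abs_add_le (Real.exp x - (1 + x + x^2/2 + x^3/6 + x^4/24))
      (Real.exp (-x) - (1 + (-x) + (-x)^2/2 + (-x)^3/6 + (-x)^4/24))
  have heq : (Real.exp x + Real.exp (-x))/2 - (1 + x^2/2)
      = ((Real.exp x - (1 + x + x^2/2 + x^3/6 + x^4/24))
        + (Real.exp (-x) - (1 + (-x) + (-x)^2/2 + (-x)^3/6 + (-x)^4/24)))/2 + x^4/24 := by ring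
  rw [heq]
  rw [abs_neg] at h2
  have h5 : |x|^5 ≤ |x|^4 := pow_le_pow_of_le_one (abs_nonneg x) hx (by norm_num)
  have h6 : |x^4| = |x|^4 := abs_pow x 4
  have h7 : x^4 ≤ |x|^4 := by rw [← h6]; exact le_abs_self _
  have h8 : |((Real.exp x - (1 + x + x^2/2 + x^3/6 + x^4/24))
        + (Real.exp (-x) - (1 + (-x) + (-x)^2/2 + (-x)^3/6 + (-x)^4/24)))/2 + x^4/24|
      ≤ |((Real.exp x - (1 + x + x^2/2 + x^3/6 + x^4/24))
        + (Real.exp (-x) - (1 + (-x) + (-x)^2/2 + (-x)^3/6 + (-x)^4/24)))/2| + |x^4/24| :=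
    abs_add_le _ _
  rw [abs_div, abs_two, abs_div] at h8
  have h9 : |(24:ℝ)| = 24 := by norm_num
  rw [h9, h6] at h8
  have h10 : x^4/24 ≤ |x|^4/24 := by nlinarith
  nlinarith [abs_nonneg ((Real.exp x - (1 + x + x^2/2 + x^3/6 + x^4/24))
        + (Real.exp (-x) - (1 + (-x) + (-x)^2/2 + (-x)^3/6 + (-x)^4/24)))]

private lemma sinh_err (a : ℝ) :
    (fun κ : ℝ => Real.sinh (a*κ) - (a*κ + (a*κ)^3/6)) =O[nhds (0:ℝ)] fun κ => κ^5 := by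
  rw [isBigO_iff]
  refine ⟨|a|^5, ?_⟩
  have h0 : Tendsto (fun κ : ℝ => |a*κ|) (nhds 0) (nhds 0) := by
    have hc : ContinuousAt (fun κ : ℝ => |a*κ|) 0 := by fun_prop
    simpa using hc.tendsto
  filter_upwards [h0.eventually_lt_const one_pos] with κ hκ
  have h1 := sinh_taylor hκ.le
  rw [Real.norm_eq_abs, Real.norm_eq_abs]
  calc |Real.sinh (a*κ) - (a*κ + (a*κ)^3/6)| ≤ |a*κ|^5 := h1
    _ = |a|^5 * |κ^5| := by rw [abs_mul, mul_pow, abs_pow]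

private lemma cosh_err (a : ℝ) :
    (fun κ : ℝ => Real.cosh (a*κ) - (1 + (a*κ)^2/2)) =O[nhds (0:ℝ)] fun κ => κ^4 := by
  rw [isBigO_iff]
  refine ⟨2*|a|^4, ?_⟩
  have h0 : Tendsto (fun κ : ℝ => |a*κ|) (nhds 0) (nhds 0) := by
    have hc : ContinuousAt (fun κ : ℝ => |a*κ|) 0 := by fun_prop
    simpa using hc.tendsto
  filter_upwards [h0.eventually_lt_const one_pos] with κ hκ
  have h1 := cosh_taylor hκ.le
  rw [Real.norm_eq_abs, Real.norm_eq_abs]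
  calc |Real.cosh (a*κ) - (1 + (a*κ)^2/2)| ≤ 2*|a*κ|^4 := h1
    _ = 2*|a|^4 * |κ^4| := by rw [abs_mul, mul_pow, abs_pow]; ring
set_option maxHeartbeats 1000000 in
theorem negative_band_condition_near_zero
    (ℓ ℓ₁ ℓ₃ : ℝ) (hℓ : 0 < ℓ) (hℓ₁ : 0 < ℓ₁) (hℓ₃ : 0 < ℓ₃) (hℓ₃' : ℓ₃ < 2 * π)
    (ρ τ W : ℝ → ℝ)
    (hρ : ∀ κ, ρ κ = (κ^2 * ℓ^2 + 1)^2 *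
        (sinh (κ * (2 * π - ℓ₁)) + 2 * sinh (κ * ℓ₁) * cosh (2 * κ * (π - ℓ₃))))
    (hτ : ∀ κ, τ κ = (κ^2 * ℓ^2 - 3)^2 * sinh (κ * (ℓ₁ + 2 * π))
        + 8 * (κ^2 * ℓ^2 - 1) * sinh (κ * ℓ₁))
    (hW : ∀ κ, W κ = 128 * (sinh (π * κ))^2 *
        (κ^4 * ℓ^4 - 6 * κ^2 * ℓ^2 + (κ^2 * ℓ^2 + 1)^2 * cosh (2 * κ * (π - ℓ₃)) + 1)
        - (ρ κ - τ κ)^2) :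
    (fun κ => W κ + 128 * π * (ℓ₁ + 2 * π) * ((2 * π - ℓ₃) * ℓ₃ + 2 * π * ℓ₁) * κ^4)
        =O[nhdsWithin 0 (Set.Ioi 0)] (fun κ => κ^6) ∧
      ∃ κ₀ > 0, ∀ κ, 0 < κ → κ < κ₀ → W κ < 0 := by
  have hπ := Real.pi_pos
  set C : ℝ := 128 * π * (ℓ₁ + 2 * π) * ((2 * π - ℓ₃) * ℓ₃ + 2 * π * ℓ₁) with hCdef
  have hρ' : ∀ κ : ℝ, ρ κ = (κ^2*ℓ^2+1)^2 *
      (sinh ((2*π-ℓ₁)*κ) + 2*sinh (ℓ₁*κ) * cosh ((2*(π-ℓ₃))*κ)) := by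
    intro κ
    rw [hρ κ, show κ*(2*π-ℓ₁) = (2*π-ℓ₁)*κ by ring, show κ*ℓ₁ = ℓ₁*κ by ring,
      show 2*κ*(π-ℓ₃) = (2*(π-ℓ₃))*κ by ring]
  have hτ' : ∀ κ : ℝ, τ κ = (κ^2*ℓ^2-3)^2 * sinh ((ℓ₁+2*π)*κ)
      + 8*(κ^2*ℓ^2-1)*sinh (ℓ₁*κ) := by
    intro κ
    rw [hτ κ, show κ*(ℓ₁+2*π) = (ℓ₁+2*π)*κ by ring, show κ*ℓ₁ = ℓ₁*κ by ring]
  have hW' : ∀ κ : ℝ, W κ = 128 * (sinh (π*κ))^2 * (κ^4*ℓ^4 - 6*κ^2*ℓ^2 + (κ^2*ℓ^2+1)^2 * cosh ((2*(π-ℓ₃))*κ) + 1) - (ρ κ - τ κ)^2 := by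
    intro κ
    rw [hW κ, show 2*κ*(π-ℓ₃) = (2*(π-ℓ₃))*κ by ring]
    try ring
  have hEU := sinh_err (2*π-ℓ₁)
  have hEV := sinh_err ℓ₁
  have hEW := sinh_err (ℓ₁+2*π)
  have hES := sinh_err π
  have hEC := cosh_err (2*(π-ℓ₃))
  -- (i) sinh(πκ)^2 expansion
  have h1 : (fun κ : ℝ => (sinh (π*κ)^2 - (π^2*κ^2 + π^4*κ^4/3))) =O[nhds (0:ℝ)] fun κ => κ^6 := by
    have heq : (fun κ : ℝ => (sinh (π*κ)^2 - (π^2*κ^2 + π^4*κ^4/3)))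
        = fun κ : ℝ => κ^6 * (π^6/36) + (sinh (π*κ) - (π*κ + (π*κ)^3/6)) * (κ^1 * (2*π + π^3*κ^2/3) + (sinh (π*κ) - (π*κ + (π*κ)^3/6))) := by
      funext κ; ring
    rw [heq]
    exact (O_mul' (a := 6) (b := 0) (n := 6) (isBigO_refl (fun κ : ℝ => κ^6) _)
        (O_cont0 (by fun_prop)) (by omega)).add
      (O_mul' (a := 5) (b := 1) (n := 6) hES
        ((O_mul' (a := 1) (b := 0) (n := 1) (isBigO_refl (fun κ : ℝ => κ^1) _)
            (O_cont0 (by fun_prop)) (by omega)).add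
          (O_weaken (m := 1) (n := 5) (by omega) hES)) (by omega))
  -- (ii) bracket expansion
  have h2 : (fun κ : ℝ => (κ^4*ℓ^4 - 6*κ^2*ℓ^2 + (κ^2*ℓ^2+1)^2 * cosh ((2*(π-ℓ₃))*κ) + 1) - (2 + (2*(π-ℓ₃)^2 - 4*ℓ^2)*κ^2)) =O[nhds (0:ℝ)] fun κ => κ^4 := by
    have heq : (fun κ : ℝ => (κ^4*ℓ^4 - 6*κ^2*ℓ^2 + (κ^2*ℓ^2+1)^2 * cosh ((2*(π-ℓ₃))*κ) + 1) - (2 + (2*(π-ℓ₃)^2 - 4*ℓ^2)*κ^2))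
        = fun κ : ℝ => κ^4 * (2*ℓ^4 + 4*ℓ^2*(π-ℓ₃)^2 + 2*ℓ^4*(π-ℓ₃)^2*κ^2)
          + (κ^2*ℓ^2+1)^2 * (cosh ((2*(π-ℓ₃))*κ) - (1 + ((2*(π-ℓ₃))*κ)^2/2)) := by
      funext κ; ring
    rw [heq]
    exact (O_mul' (a := 4) (b := 0) (n := 4) (isBigO_refl (fun κ : ℝ => κ^4) _)
        (O_cont0 (by fun_prop)) (by omega)).add
      (O_poly_mul (by fun_prop) hEC)
  -- (iii) rho - tau expansion
  have h3 : (fun κ : ℝ => ((ρ κ - τ κ) - (-(16*π*κ) + (16*π*ℓ^2 - 32*π^3/3 - 16*π^2*ℓ₁ - 8*π*ℓ₁^2 - 8*π*ℓ₁*ℓ₃ + 4*ℓ₁*ℓ₃^2)*κ^3))) =O[nhds (0:ℝ)] fun κ => κ^5 := by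
    have heq : (fun κ : ℝ => ((ρ κ - τ κ) - (-(16*π*κ) + (16*π*ℓ^2 - 32*π^3/3 - 16*π^2*ℓ₁ - 8*π*ℓ₁^2 - 8*π*ℓ₁*ℓ₃ + 4*ℓ₁*ℓ₃^2)*κ^3)))
        = fun κ : ℝ =>
            ((κ^2*ℓ^2+1)^2) * (sinh ((2*π-ℓ₁)*κ) - ((2*π-ℓ₁)*κ + ((2*π-ℓ₁)*κ)^3/6))
          + ((κ^2*ℓ^2+1)^2 * (2*(1 + ((2*(π-ℓ₃))*κ)^2/2))) * (sinh (ℓ₁*κ) - (ℓ₁*κ + (ℓ₁*κ)^3/6))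
          + ((κ^2*ℓ^2+1)^2 * (2*(ℓ₁ + ℓ₁^3*κ^2/6))) * (κ^1 * (cosh ((2*(π-ℓ₃))*κ) - (1 + ((2*(π-ℓ₃))*κ)^2/2)))
          + ((κ^2*ℓ^2+1)^2 * 2) * ((sinh (ℓ₁*κ) - (ℓ₁*κ + (ℓ₁*κ)^3/6)) * (cosh ((2*(π-ℓ₃))*κ) - (1 + ((2*(π-ℓ₃))*κ)^2/2)))
          + (-(κ^2*ℓ^2-3)^2) * (sinh ((ℓ₁+2*π)*κ) - ((ℓ₁+2*π)*κ + ((ℓ₁+2*π)*κ)^3/6))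
          + (-(8*(κ^2*ℓ^2-1))) * (sinh (ℓ₁*κ) - (ℓ₁*κ + (ℓ₁*κ)^3/6))
          + κ^5 * (2/3*ℓ₁^3*(π-ℓ₃)^2 + 8*ℓ^2*ℓ₁*((π-ℓ₃)^2+π^2) + 8*π*ℓ^2*ℓ₁^2 + 32*π^3*ℓ^2/3 + κ^2*(4*ℓ^2*ℓ₁^3*(π-ℓ₃)^2/3 + 4*ℓ^4*ℓ₁*ℓ₃*(ℓ₃-2*π)) + κ^4*(2*ℓ^4*ℓ₁^3*(π-ℓ₃)^2/3)) := by
      funext κ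
      rw [hρ' κ, hτ' κ]
      ring
    rw [heq]
    exact ((((((O_poly_mul (by fun_prop) hEU).add
      (O_poly_mul (by fun_prop) hEV)).add
      (O_poly_mul (by fun_prop) (O_mul' (a := 1) (b := 4) (n := 5)
        (isBigO_refl (fun κ : ℝ => κ^1) _) hEC (by omega)))).add
      (O_poly_mul (by fun_prop) (O_mul' (a := 5) (b := 4) (n := 5) hEV hEC (by omega)))).add
      (O_poly_mul (by fun_prop) hEW)).add
      (O_poly_mul (by fun_prop) hEV)).add
      (O_mul' (a := 5) (b := 0) (n := 5) (isBigO_refl (fun κ : ℝ => κ^5) _)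
        (O_cont0 (by fun_prop)) (by omega))
  -- (iv) rho - tau + P is O(kappa)
  have h4 : (fun κ : ℝ => ((ρ κ - τ κ) + (-(16*π*κ) + (16*π*ℓ^2 - 32*π^3/3 - 16*π^2*ℓ₁ - 8*π*ℓ₁^2 - 8*π*ℓ₁*ℓ₃ + 4*ℓ₁*ℓ₃^2)*κ^3))) =O[nhds (0:ℝ)] fun κ => κ^1 := by
    have heq : (fun κ : ℝ => ((ρ κ - τ κ) + (-(16*π*κ) + (16*π*ℓ^2 - 32*π^3/3 - 16*π^2*ℓ₁ - 8*π*ℓ₁^2 - 8*π*ℓ₁*ℓ₃ + 4*ℓ₁*ℓ₃^2)*κ^3)))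
        = fun κ : ℝ => ((ρ κ - τ κ) - (-(16*π*κ) + (16*π*ℓ^2 - 32*π^3/3 - 16*π^2*ℓ₁ - 8*π*ℓ₁^2 - 8*π*ℓ₁*ℓ₃ + 4*ℓ₁*ℓ₃^2)*κ^3)) + κ^1 * (2*(-(16*π) + (16*π*ℓ^2 - 32*π^3/3 - 16*π^2*ℓ₁ - 8*π*ℓ₁^2 - 8*π*ℓ₁*ℓ₃ + 4*ℓ₁*ℓ₃^2)) + 2*(16*π*ℓ^2 - 32*π^3/3 - 16*π^2*ℓ₁ - 8*π*ℓ₁^2 - 8*π*ℓ₁*ℓ₃ + 4*ℓ₁*ℓ₃^2)*(κ^2-1)) := by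
      funext κ; ring
    rw [heq]
    exact (O_weaken (m := 1) (n := 5) (by omega) h3).add
      (O_mul' (a := 1) (b := 0) (n := 1) (isBigO_refl (fun κ : ℝ => κ^1) _)
        (O_cont0 (by fun_prop)) (by omega))
  -- key decomposition
  have hkey : (fun κ : ℝ => W κ + C * κ^4)
      = fun κ : ℝ =>
          (128 * (κ^4*ℓ^4 - 6*κ^2*ℓ^2 + (κ^2*ℓ^2+1)^2 * cosh ((2*(π-ℓ₃))*κ) + 1)) * (sinh (π*κ)^2 - (π^2*κ^2 + π^4*κ^4/3))
        + (128*(π^2 + π^4*κ^2/3)) * (κ^2 * ((κ^4*ℓ^4 - 6*κ^2*ℓ^2 + (κ^2*ℓ^2+1)^2 * cosh ((2*(π-ℓ₃))*κ) + 1) - (2 + (2*(π-ℓ₃)^2 - 4*ℓ^2)*κ^2)))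
        + (-((ρ κ - τ κ) - (-(16*π*κ) + (16*π*ℓ^2 - 32*π^3/3 - 16*π^2*ℓ₁ - 8*π*ℓ₁^2 - 8*π*ℓ₁*ℓ₃ + 4*ℓ₁*ℓ₃^2)*κ^3))) * ((ρ κ - τ κ) + (-(16*π*κ) + (16*π*ℓ^2 - 32*π^3/3 - 16*π^2*ℓ₁ - 8*π*ℓ₁^2 - 8*π*ℓ₁*ℓ₃ + 4*ℓ₁*ℓ₃^2)*κ^3))
        + κ^6 * (128*(π^2 + π^4/3)*(2 + (2*(π-ℓ₃)^2 - 4*ℓ^2)) - (-(16*π) + (16*π*ℓ^2 - 32*π^3/3 - 16*π^2*ℓ₁ - 8*π*ℓ₁^2 - 8*π*ℓ₁*ℓ₃ + 4*ℓ₁*ℓ₃^2))^2 + C) := by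
    funext κ
    rw [hW' κ, hCdef]
    ring
  have hO6 : (fun κ : ℝ => W κ + C * κ^4) =O[nhds (0:ℝ)] fun κ => κ^6 := by
    rw [hkey]
    exact (((O_poly_mul (by fun_prop) h1).add
      (O_poly_mul (by fun_prop) (O_mul' (a := 2) (b := 4) (n := 6)
        (isBigO_refl (fun κ : ℝ => κ^2) _) h2 (by omega)))).add
      (O_mul' (a := 5) (b := 1) (n := 6) h3.neg_left h4 (by omega))).add
      (O_mul' (a := 6) (b := 0) (n := 6) (isBigO_refl (fun κ : ℝ => κ^6) _)
        (O_cont0 (by fun_prop)) (by omega))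
  have hO : (fun κ : ℝ => W κ + C * κ^4) =O[nhdsWithin 0 (Set.Ioi 0)] fun κ => κ^6 :=
    hO6.mono nhdsWithin_le_nhds
  refine ⟨hO, ?_⟩
  have hCpos : 0 < C := by
    rw [hCdef]
    have h2π : 0 < 2*π - ℓ₃ := by linarith
    have hx : 0 < (2 * π - ℓ₃) * ℓ₃ + 2 * π * ℓ₁ := by nlinarith
    have hy : 0 < ℓ₁ + 2 * π := by linarith
    have hz : (0:ℝ) < 128 * π := by linarith
    exact mul_pos (mul_pos hz hy) hx
  obtain ⟨K, hK⟩ := hO.bound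
  have hKpos : (0:ℝ) < |K| + 1 := by positivity
  have hsm : ∀ᶠ κ in nhdsWithin (0:ℝ) (Set.Ioi 0), κ^2 < C/(|K|+1) := by
    have ht : Tendsto (fun κ : ℝ => κ^2) (nhdsWithin (0:ℝ) (Set.Ioi 0)) (nhds 0) := by
      have hc : Tendsto (fun κ : ℝ => κ^2) (nhds (0:ℝ)) (nhds 0) := by
        have := (continuous_pow 2).tendsto (0:ℝ); simpa using this
      exact hc.mono_left nhdsWithin_le_nhds
    exact ht.eventually_lt_const (div_pos hCpos hKpos)
  have hmem : ∀ᶠ κ in nhdsWithin (0:ℝ) (Set.Ioi 0), κ ∈ Set.Ioi (0:ℝ) :=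
    eventually_mem_nhdsWithin
  have hev : ∀ᶠ κ in nhdsWithin (0:ℝ) (Set.Ioi 0), W κ < 0 := by
    filter_upwards [hK, hsm, hmem] with κ hb hs hp
    have hp' : (0:ℝ) < κ := hp
    rw [Real.norm_eq_abs, Real.norm_eq_abs] at hb
    have hκ6 : |κ^6| = κ^6 := abs_of_nonneg (by positivity)
    rw [hκ6] at hb
    have h7 : W κ + C*κ^4 ≤ (|K|+1)*κ^6 := by
      nlinarith [le_abs_self (W κ + C*κ^4), le_abs_self K, pow_nonneg hp'.le 6]
    have hlt : (|K|+1)*κ^2 < C := by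
      rw [lt_div_iff₀ hKpos] at hs
      linarith
    nlinarith [mul_pos (sub_pos.mpr hlt) (pow_pos hp' 4), h7]
  obtain ⟨κ₀, hκ₀, hsub⟩ := (nhdsGT_basis (0:ℝ)).eventually_iff.mp hev
  exact ⟨κ₀, hκ₀, fun κ hκ1 hκ2 => hsub ⟨hκ1, hκ2⟩⟩
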